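/- Let V be a module over a field of characteristic zero, let N be a positive integer, and let ν_n : V^n → V (for 1 ≤ n ≤ N) be a family of symmetric multilinear maps, with ν_n = 0 for n > N. For a ∈ V define the twisted operations ν^a_n(x₁,…,x_n) = ∑_{k≥0} (1/k!) ν_{n+k}(a,…,a,x₁,…,x_n) (a finite sum). Then for all a, b ∈ V and all n, (ν^a)^b_n = ν^{a+b}_n. -/

import Mathlib

/-- The twisted operation `ν^a_n(x₁,…,x_n) = ∑_{k≥0} (1/k!) ν_{n+k}(a,…,a,x₁,…,x_n)`.
Since `ν_n = 0` for `n > N`, the sum over `k ∈ {0,…,N}` captures all nonzero terms. -/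
noncomputable def twistFun (K : Type*) [Field K] (V : Type*) [AddCommGroup V] [Module K V]
    (N : ℕ) (ν : (n : ℕ) → MultilinearMap K (fun _ : Fin n => V) V)
    (a : V) (n : ℕ) (x : Fin n → V) : V :=
  ∑ k ∈ Finset.range (N + 1),
    ((Nat.factorial k : K)⁻¹) • ν (k + n) (Fin.append (fun _ : Fin k => a) x)

section TwistAux

variable {K : Type*} [Field K] {V : Type*} [AddCommGroup V] [Module K V]

lemma twistAux_nu_congr (ν : (n : ℕ) → MultilinearMap K (fun _ : Fin n => V) V)
    {m m' : ℕ} (h : m = m') (y : Fin m' → V) :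
    ν m' y = ν m (y ∘ Fin.cast h) := by subst h; rfl

omit [AddCommGroup V] [Module K V] in
lemma twistAux_append_update {m n : ℕ} [DecidableEq (Fin m)]
    (g : Fin m → V) (x : Fin n → V) (i : Fin m) (v : V) :
    Fin.append (Function.update g i v) x
      = Function.update (Fin.append g x) (Fin.castAdd n i) v := by
  funext j
  refine Fin.addCases (fun l => ?_) (fun r => ?_) j
  · rw [Fin.append_left]
    rcases eq_or_ne l i with rfl | hne
    · simp
    · rw [Function.update_of_ne hne, Function.update_of_ne, Fin.append_left]
      simpa [Fin.ext_iff] using (by simpa [Fin.ext_iff] using hne : (l : ℕ) ≠ i)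
  · rw [Fin.append_right, Function.update_of_ne, Fin.append_right]
    simp only [ne_eq, Fin.ext_iff, Fin.coe_natAdd, Fin.coe_castAdd]
    omega

/-- Fixing the last `n` arguments of a multilinear map in `m + n` arguments yields a
multilinear map in `m` arguments. -/
noncomputable def twistAuxFixTail {m n : ℕ}
    (μ : MultilinearMap K (fun _ : Fin (m + n) => V) V)
    (x : Fin n → V) : MultilinearMap K (fun _ : Fin m => V) V where
  toFun g := μ (Fin.append g x)
  map_update_add' g i u v := by
    simp only [twistAux_append_update, μ.map_update_add]
  map_update_smul' g i c v := by
    simp only [twistAux_append_update, μ.map_update_smul]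

omit [Module K V] in
lemma twistAux_piecewise_sorted {m : ℕ} (a b : V) (s : Finset (Fin m)) :
    ∃ σ : Equiv.Perm (Fin m),
      (s.piecewise (fun _ => a) (fun _ => b) : Fin m → V) ∘ σ
        = (Fin.append (fun _ : Fin s.card => a) (fun _ : Fin (m - s.card) => b)) ∘
            Fin.cast (by have := s.card_le_univ; simp at this; omega) := by
  classical
  set k := s.card with hk
  have hc : (sᶜ : Finset (Fin m)).card = m - k := by
    simp [Finset.card_compl, hk]
  have h : m = k + (m - k) := by have := s.card_le_univ; simp at this; omega
  let e1 : Fin k ≃ {x // x ∈ s} := (s.orderIsoOfFin rfl).toEquiv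
  let e2 : Fin (m - k) ≃ {x // x ∈ sᶜ} := ((sᶜ).orderIsoOfFin hc).toEquiv
  let e2' : {x // x ∈ sᶜ} ≃ {x // ¬ x ∈ s} := Equiv.subtypeEquivRight (by simp)
  let σ0 : Fin (k + (m - k)) ≃ Fin m :=
    finSumFinEquiv.symm.trans ((e1.sumCongr (e2.trans e2')).trans (Equiv.sumCompl (· ∈ s)))
  refine ⟨(finCongr h).trans σ0, ?_⟩
  funext i
  show s.piecewise (fun _ => a) (fun _ => b) (σ0 (Fin.cast h i))
      = (Fin.append (fun _ : Fin k => a) (fun _ : Fin (m - k) => b)) (Fin.cast h i)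
  generalize (Fin.cast h i : Fin (k + (m - k))) = j
  refine Fin.addCases (fun l => ?_) (fun r => ?_) j
  · have : σ0 (Fin.castAdd _ l) = (e1 l : Fin m) := by
      simp [σ0, Equiv.sumCongr_apply]
    rw [this, Finset.piecewise_eq_of_mem _ _ _ (e1 l).2, Fin.append_left]
  · have : σ0 (Fin.natAdd _ r) = ((e2.trans e2') r : Fin m) := by
      simp [σ0, Equiv.sumCongr_apply]
    rw [this, Finset.piecewise_eq_of_notMem _ _ _ ((e2.trans e2') r).2,
      Fin.append_right]

omit [Module K V] in
lemma twistAux_append_comp_perm {m n : ℕ} (P : Fin m → V) (x : Fin n → V)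
    (σ : Equiv.Perm (Fin m)) :
    (Fin.append P x) ∘ (finSumFinEquiv.symm.trans
        ((σ.sumCongr (Equiv.refl (Fin n))).trans finSumFinEquiv) : Equiv.Perm (Fin (m + n)))
      = Fin.append (P ∘ σ) x := by
  funext i
  refine Fin.addCases (fun l => ?_) (fun r => ?_) i <;>
    simp [Equiv.sumCongr_apply]

lemma twistAux_nu_piecewise (ν : (n : ℕ) → MultilinearMap K (fun _ : Fin n => V) V)
    (hsym : ∀ (n : ℕ) (σ : Equiv.Perm (Fin n)) (x : Fin n → V), ν n (x ∘ σ) = ν n x)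
    {m n : ℕ} (a b : V) (x : Fin n → V) (s : Finset (Fin m)) :
    ν (m + n) (Fin.append (s.piecewise (fun _ => a) (fun _ => b)) x)
      = ν (s.card + (m - s.card) + n)
          (Fin.append (Fin.append (fun _ : Fin s.card => a)
            (fun _ : Fin (m - s.card) => b)) x) := by
  obtain ⟨σ, hσ⟩ := twistAux_piecewise_sorted a b s
  have h' : m + n = s.card + (m - s.card) + n := by
    have := s.card_le_univ; simp at this; omega
  rw [← hsym (m + n)
      (finSumFinEquiv.symm.trans ((σ.sumCongr (Equiv.refl (Fin n))).trans finSumFinEquiv))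
      (Fin.append (s.piecewise (fun _ => a) (fun _ => b)) x),
    twistAux_append_comp_perm, hσ, Fin.append_cast_left,
    twistAux_nu_congr ν h' (Fin.append (Fin.append (fun _ : Fin s.card => a)
      (fun _ : Fin (m - s.card) => b)) x)]

lemma twistAux_assoc (ν : (n : ℕ) → MultilinearMap K (fun _ : Fin n => V) V)
    {k j n : ℕ} (A : Fin k → V) (B : Fin j → V) (x : Fin n → V) :
    ν (k + (j + n)) (Fin.append A (Fin.append B x))
      = ν (k + j + n) (Fin.append (Fin.append A B) x) := by
  rw [twistAux_nu_congr ν (Nat.add_assoc k j n) (Fin.append A (Fin.append B x)),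
    Fin.append_assoc]

lemma twistAux_inv_fact_choose [CharZero K] {k m : ℕ} (hk : k ≤ m) :
    ((m.factorial : K))⁻¹ * (m.choose k : K)
      = ((k.factorial : K))⁻¹ * (((m - k).factorial : K))⁻¹ := by
  have h := Nat.choose_mul_factorial_mul_factorial hk
  have h1 : (k.factorial : K) ≠ 0 := Nat.cast_ne_zero.2 k.factorial_ne_zero
  have h2 : (((m - k).factorial : K)) ≠ 0 := Nat.cast_ne_zero.2 (m - k).factorial_ne_zero
  have h3 : (m.factorial : K) ≠ 0 := Nat.cast_ne_zero.2 m.factorial_ne_zero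
  field_simp
  exact_mod_cast h

omit [Field K] [Module K V] in
lemma twistAux_sum_card_fiber {m : ℕ} (g : ℕ → V) :
    ∑ s : Finset (Fin m), g s.card
      = ∑ k ∈ Finset.range (m + 1), (m.choose k) • g k := by
  classical
  rw [← Finset.sum_fiberwise_of_maps_to (g := Finset.card) (t := Finset.range (m + 1))
      (fun s _ => Finset.mem_range.2 (Nat.lt_succ_of_le (by simpa using s.card_le_univ)))]
  refine Finset.sum_congr rfl fun k _ => ?_
  rw [Finset.sum_congr rfl (fun s hs => by rw [(Finset.mem_filter.1 hs).2]),
    Finset.sum_const]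
  congr 1
  have : Finset.univ.filter (fun s : Finset (Fin m) => s.card = k)
      = Finset.powersetCard k Finset.univ := by
    rw [Finset.powersetCard_eq_filter, Finset.powerset_univ]
  rw [this, Finset.card_powersetCard]
  simp

end TwistAux

/-- Twisting by `a` and then by `b` agrees with twisting by `a + b`:
`(ν^a)^b_n = ν^{a+b}_n`. -/
theorem twist_twist_eq_twist_add (K : Type*) [Field K] [CharZero K]
    (V : Type*) [AddCommGroup V] [Module K V]
    (N : ℕ) (hN : 0 < N)
    (ν : (n : ℕ) → MultilinearMap K (fun _ : Fin n => V) V)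
    (hsym : ∀ (n : ℕ) (σ : Equiv.Perm (Fin n)) (x : Fin n → V), ν n (x ∘ σ) = ν n x)
    (hvan : ∀ n : ℕ, N < n → ν n = 0)
    (a b : V) (n : ℕ) (x : Fin n → V) :
    (∑ j ∈ Finset.range (N + 1),
        ((Nat.factorial j : K)⁻¹) •
          twistFun K V N ν a (j + n) (Fin.append (fun _ : Fin j => b) x))
      = twistFun K V N ν (a + b) n x := by
  classical
  set F : ℕ × ℕ → V := fun p =>
    (((p.1.factorial : K))⁻¹ * ((p.2.factorial : K))⁻¹) •
      ν (p.1 + p.2 + n)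
        (Fin.append (Fin.append (fun _ : Fin p.1 => a) (fun _ : Fin p.2 => b)) x)
    with hF
  have hFzero : ∀ p : ℕ × ℕ, N < p.1 + p.2 → F p = 0 := by
    intro p hp
    have : ν (p.1 + p.2 + n) = 0 := hvan _ (by omega)
    simp [hF, this]
  -- Left-hand side equals the sum of `F` over the square.
  have hLHS : (∑ j ∈ Finset.range (N + 1),
        ((Nat.factorial j : K)⁻¹) •
          twistFun K V N ν a (j + n) (Fin.append (fun _ : Fin j => b) x))
      = ∑ p ∈ Finset.range (N + 1) ×ˢ Finset.range (N + 1), F p := by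
    rw [Finset.sum_product, Finset.sum_comm]
    refine Finset.sum_congr rfl fun j _ => ?_
    rw [twistFun, Finset.smul_sum]
    refine Finset.sum_congr rfl fun k _ => ?_
    rw [twistAux_assoc ν, smul_smul, mul_comm, hF]
  -- Right-hand side equals the sum of `F` over the union of antidiagonals.
  have hRHS : twistFun K V N ν (a + b) n x
      = ∑ p ∈ (Finset.range (N + 1)).biUnion (fun m => Finset.HasAntidiagonal.antidiagonal m), F p := by
    calc twistFun K V N ν (a + b) n x
        = ∑ m ∈ Finset.range (N + 1), ∑ k ∈ Finset.range (m + 1), F (k, m - k) := by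
          rw [twistFun]
          refine Finset.sum_congr rfl fun m hm => ?_
          have h2 : ν (m + n) (Fin.append (fun _ : Fin m => a + b) x)
              = ∑ s : Finset (Fin m),
                  ν (m + n) (Fin.append (s.piecewise (fun _ => a) (fun _ => b)) x) :=
            (twistAuxFixTail (ν (m + n)) x).map_add_univ (fun _ => a) (fun _ => b)
          rw [h2,
            Finset.sum_congr rfl (fun s _ => twistAux_nu_piecewise ν hsym a b x s),
            twistAux_sum_card_fiber (fun k => ν (k + (m - k) + n)
              (Fin.append (Fin.append (fun _ : Fin k => a)
                (fun _ : Fin (m - k) => b)) x)),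
            Finset.smul_sum]
          refine Finset.sum_congr rfl fun k hk => ?_
          have hk' : k ≤ m := Nat.lt_succ_iff.1 (Finset.mem_range.1 hk)
          rw [← Nat.cast_smul_eq_nsmul K, smul_smul, twistAux_inv_fact_choose hk', hF]
      _ = ∑ m ∈ Finset.range (N + 1), ∑ p ∈ Finset.HasAntidiagonal.antidiagonal m, F p :=
          Finset.sum_congr rfl fun m _ =>
            (Finset.Nat.sum_antidiagonal_eq_sum_range_succ_mk F m).symm
      _ = ∑ p ∈ (Finset.range (N + 1)).biUnion (fun m => Finset.HasAntidiagonal.antidiagonal m), F p := by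
          rw [Finset.sum_biUnion]
          intro m1 _ m2 _ hne
          simp only [Function.onFun, Finset.disjoint_left]
          intro p hp1 hp2
          exact hne (by
            rw [← Finset.HasAntidiagonal.mem_antidiagonal.1 hp1, ← Finset.HasAntidiagonal.mem_antidiagonal.1 hp2])
  rw [hLHS, hRHS]
  refine (Finset.sum_subset ?_ ?_).symm
  · intro p hp
    obtain ⟨m, hm, hpm⟩ := Finset.mem_biUnion.1 hp
    have hm' := Finset.mem_range.1 hm
    have := Finset.HasAntidiagonal.mem_antidiagonal.1 hpm
    simp only [Finset.mem_product, Finset.mem_range]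
    omega
  · intro p hp hnp
    refine hFzero p ?_
    by_contra hle
    exact hnp (Finset.mem_biUnion.2 ⟨p.1 + p.2, Finset.mem_range.2 (by omega),
      Finset.HasAntidiagonal.mem_antidiagonal.2 rfl⟩)
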